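/- The left quaternion discrete cosine transform preserves total energy (Parseval theorem): for every quaternion matrix Q ∈ ℍ^{M×N}, ‖FQDCT^L(Q)‖_F = ‖Q‖_F. -/

import Mathlib

open Matrix

/-- Normalization factor of the DCT: `α(u) = √(1/M)` if `u = 0`, `√(2/M)` otherwise. -/
noncomputable def dctAlpha (M : ℕ) (u : Fin M) : ℝ :=
  if (u : ℕ) = 0 then Real.sqrt (1 / M) else Real.sqrt (2 / M)

/-- DCT kernel `N(u,v,m,n) = cos(π(2m+1)u/(2M)) · cos(π(2n+1)v/(2N))`. -/
noncomputable def dctKer (M N : ℕ) (u : Fin M) (v : Fin N) (m : Fin M) (n : Fin N) : ℝ :=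
  Real.cos (Real.pi * (2 * (m : ℝ) + 1) * (u : ℝ) / (2 * (M : ℝ))) *
    Real.cos (Real.pi * (2 * (n : ℝ) + 1) * (v : ℝ) / (2 * (N : ℝ)))

/-- Left forward quaternion discrete cosine transform:
`FQDCT^L(Q)(u,v) = α(u)β(v) Σ_m Σ_n q̇ · Q(m,n) · N(u,v,m,n)`. -/
noncomputable def FQDCTL (M N : ℕ) (q : Quaternion ℝ)
    (Q : Matrix (Fin M) (Fin N) (Quaternion ℝ)) :
    Matrix (Fin M) (Fin N) (Quaternion ℝ) :=
  Matrix.of fun u v =>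
    (dctAlpha M u * dctAlpha N v) •
      ∑ m : Fin M, ∑ n : Fin N, (dctKer M N u v m n) • (q * Q m n)

/-- Frobenius norm of a quaternion matrix: `‖A‖_F = sqrt(Σ_{m,n} |A(m,n)|²)`. -/
noncomputable def frob {M N : ℕ} (A : Matrix (Fin M) (Fin N) (Quaternion ℝ)) : ℝ :=
  Real.sqrt (∑ m : Fin M, ∑ n : Fin N, ‖A m n‖ ^ 2)

section aux
open Real Complex

lemma inv_re_of_norm_one (z : ℂ) (hz : ‖z‖ = 1) (h1 : z ≠ 1) : ((z - 1)⁻¹).re = -(1/2) := by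
  have hsq : z.re ^ 2 + z.im ^ 2 = 1 := by
    nlinarith [Complex.normSq_apply z, hz, Complex.normSq_eq_norm_sq z]
  have hre : z.re ≠ 1 := by
    intro h
    apply h1
    have him : z.im = 0 := by nlinarith
    exact Complex.ext h him
  have h2 : z.re - 1 ≠ 0 := sub_ne_zero.mpr hre
  rw [Complex.inv_re, Complex.normSq_apply]
  simp only [Complex.sub_re, Complex.sub_im, Complex.one_re, Complex.one_im, sub_zero]
  have hden : (z.re - 1) * (z.re - 1) + z.im * z.im = (z.re - 1) * (-2) := by nlinarith
  rw [hden, ← div_div, div_self h2]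
  norm_num

lemma cos_sum (M : ℕ) (hM : 0 < M) (k : ℤ) (hk : ¬ ((2*(M:ℤ)) ∣ k)) :
    ∑ u : Fin M, Real.cos (Real.pi * k * u / M) = if Odd k then 1 else 0 := by
  have hM' : (M : ℝ) ≠ 0 := Nat.cast_ne_zero.mpr hM.ne'
  have hMc : (M : ℂ) ≠ 0 := Nat.cast_ne_zero.mpr hM.ne'
  have hpi := Real.pi_ne_zero
  set θ : ℝ := Real.pi * k / M with hθ
  set z : ℂ := Complex.exp (θ * Complex.I) with hz
  have hnorm : ‖z‖ = 1 := by
    rw [hz, Complex.norm_exp]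
    simp
  have hz1 : z ≠ 1 := by
    intro h
    rw [hz, Complex.exp_eq_one_iff] at h
    obtain ⟨n, hn⟩ := h
    apply hk
    have h2 : (θ : ℂ) * I = ((n * (2 * Real.pi) : ℝ) : ℂ) * I := by
      rw [hn]; push_cast; ring
    have h3 : θ = n * (2 * Real.pi) :=
      Complex.ofReal_inj.mp (mul_right_cancel₀ Complex.I_ne_zero h2)
    rw [hθ] at h3
    have h4 : Real.pi * (k : ℝ) = Real.pi * ((2 * M * n : ℤ) : ℝ) := by
      field_simp at h3
      push_cast
      rw [h3]; ring
    have h5 : (k : ℝ) = ((2 * M * n : ℤ) : ℝ) := mul_left_cancel₀ hpi h4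
    exact ⟨n, by exact_mod_cast h5⟩
  have hzM : z ^ M = (-1 : ℂ) ^ k := by
    rw [hz, ← Complex.exp_nat_mul]
    have : (M : ℂ) * (θ * I) = k * (Real.pi * I) := by
      rw [hθ]; push_cast; field_simp [hMc]
    rw [this, Complex.exp_int_mul, Complex.exp_pi_mul_I]
  have hterm : ∀ u : Fin M, Real.cos (Real.pi * k * u / M) = (z ^ (u : ℕ)).re := by
    intro u
    rw [hz, ← Complex.exp_nat_mul]
    have : (u : ℂ) * (θ * I) = ((Real.pi * k * u / M : ℝ) : ℂ) * I := by
      rw [hθ]; push_cast; field_simp [hMc]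
    rw [this, Complex.exp_ofReal_mul_I_re]
  simp only [hterm]
  rw [← Complex.re_sum]
  rw [Fin.sum_univ_eq_sum_range (fun u => z ^ u), geom_sum_eq hz1, hzM]
  rcases Int.even_or_odd k with he | ho
  · rw [he.neg_one_zpow]
    simp [if_neg (Int.not_odd_iff_even.mpr he)]
  · rw [ho.neg_one_zpow, if_pos ho]
    have h6 : (-1 - 1 : ℂ) / (z - 1) = (-2) * (z - 1)⁻¹ := by ring
    rw [h6]
    have h7 := inv_re_of_norm_one z hnorm hz1
    rw [Complex.mul_re, h7]
    norm_num

lemma not_dvd_of_bounds (M : ℕ) (k : ℤ) (h0 : k ≠ 0) (habs : |k| < 2*M) :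
    ¬ ((2*(M:ℤ)) ∣ k) := by
  rintro ⟨c, hc⟩
  have hc0 : c ≠ 0 := by rintro rfl; simp at hc; exact h0 hc
  have h1 : (1:ℤ) ≤ |c| := Int.one_le_abs hc0
  have h2 : |k| = 2*M*|c| := by
    rw [hc, abs_mul, abs_of_nonneg (by positivity : (0:ℤ) ≤ 2*(M:ℤ))]
  nlinarith [h2, habs, h1]

lemma cos_sum_zero (M : ℕ) : ∑ u : Fin M, Real.cos (Real.pi * ((0:ℤ):ℝ) * u / M) = M := by
  simp

lemma dct_ortho (M : ℕ) (hM : 0 < M) (m m' : Fin M) :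
    ∑ u : Fin M, dctAlpha M u ^ 2 *
      (Real.cos (Real.pi * (2 * (m : ℝ) + 1) * (u : ℝ) / (2 * (M : ℝ))) *
       Real.cos (Real.pi * (2 * (m' : ℝ) + 1) * (u : ℝ) / (2 * (M : ℝ))))
    = if m = m' then 1 else 0 := by
  haveI : NeZero M := ⟨hM.ne'⟩
  have hM' : (M : ℝ) ≠ 0 := Nat.cast_ne_zero.mpr hM.ne'
  set k1 : ℤ := (m : ℤ) - (m' : ℤ) with hk1
  set k2 : ℤ := (m : ℤ) + (m' : ℤ) + 1 with hk2
  -- product-to-sum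
  have hprod : ∀ u : Fin M,
      Real.cos (Real.pi * (2 * (m : ℝ) + 1) * (u : ℝ) / (2 * (M : ℝ))) *
      Real.cos (Real.pi * (2 * (m' : ℝ) + 1) * (u : ℝ) / (2 * (M : ℝ)))
      = (Real.cos (Real.pi * (k1:ℝ) * u / M) + Real.cos (Real.pi * (k2:ℝ) * u / M)) / 2 := by
    intro u
    set A := Real.pi * (2 * (m : ℝ) + 1) * (u : ℝ) / (2 * (M : ℝ)) with hA
    set B := Real.pi * (2 * (m' : ℝ) + 1) * (u : ℝ) / (2 * (M : ℝ)) with hB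
    have e1 : Real.pi * (k1:ℝ) * u / M = A - B := by
      rw [hA, hB, hk1]; push_cast; field_simp; ring
    have e2 : Real.pi * (k2:ℝ) * u / M = A + B := by
      rw [hA, hB, hk2]; push_cast; field_simp; ring
    rw [e1, e2, Real.cos_sub, Real.cos_add]; ring
  simp only [hprod]
  -- handle alpha
  have halpha : ∀ u : Fin M,
      dctAlpha M u ^ 2 *
        ((Real.cos (Real.pi * (k1:ℝ) * u / M) + Real.cos (Real.pi * (k2:ℝ) * u / M)) / 2)
      = (2 / M) * ((Real.cos (Real.pi * (k1:ℝ) * u / M) + Real.cos (Real.pi * (k2:ℝ) * u / M)) / 2)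
        - (if u = 0 then (1 / M : ℝ) else 0) := by
    intro u
    by_cases h : u = 0
    · subst h
      have ha : dctAlpha M 0 ^ 2 = 1 / (M:ℝ) := by
        simp only [dctAlpha, Fin.val_zero, if_pos rfl]
        exact Real.sq_sqrt (by positivity)
      rw [ha, if_pos rfl]
      simp only [Fin.val_zero, Nat.cast_zero, mul_zero, zero_div, Real.cos_zero]
      ring
    · have hv : (u : ℕ) ≠ 0 := fun hval => h (Fin.ext (by simp [hval]))
      simp only [dctAlpha, if_neg hv, if_neg h]
      rw [Real.sq_sqrt (by positivity)]
      ring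
  simp only [halpha]
  rw [Finset.sum_sub_distrib, ← Finset.mul_sum]
  have hif : (∑ u : Fin M, if u = 0 then (1 / M : ℝ) else 0) = 1 / M := by
    rw [Finset.sum_ite_eq' Finset.univ (0 : Fin M) (fun _ => (1/M : ℝ))]
    simp
  rw [hif]
  have hsplit : (∑ u : Fin M,
      (Real.cos (Real.pi * (k1:ℝ) * u / M) + Real.cos (Real.pi * (k2:ℝ) * u / M)) / 2)
      = ((∑ u : Fin M, Real.cos (Real.pi * (k1:ℝ) * u / M))
        + (∑ u : Fin M, Real.cos (Real.pi * (k2:ℝ) * u / M))) / 2 := by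
    rw [← Finset.sum_add_distrib, ← Finset.sum_div]
  rw [hsplit]
  have hk2bound : ¬ ((2*(M:ℤ)) ∣ k2) := by
    apply not_dvd_of_bounds
    · omega
    · have := m.isLt; have := m'.isLt
      rw [abs_of_pos (by omega)]
      omega
  have hT2 := cos_sum M hM k2 hk2bound
  by_cases hmm : m = m'
  · subst hmm
    have hk10 : k1 = 0 := by omega
    rw [hk10] at *
    rw [cos_sum_zero, hT2]
    have hodd : Odd k2 := by rw [hk2]; exact ⟨(m:ℤ), by ring⟩
    rw [if_pos hodd, if_pos rfl]
    field_simp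
    ring
  · have hk10 : k1 ≠ 0 := by
      simp only [hk1, sub_ne_zero]
      exact_mod_cast fun h => hmm (Fin.ext (by exact_mod_cast h))
    have hk1bound : ¬ ((2*(M:ℤ)) ∣ k1) := by
      apply not_dvd_of_bounds M k1 hk10
      have := m.isLt; have := m'.isLt
      rw [abs_sub_lt_iff]
      constructor <;> omega
    have hT1 := cos_sum M hM k1 hk1bound
    rw [hT1, hT2, if_neg hmm]
    have hpar : Odd k1 ↔ ¬ Odd k2 := by
      rw [Int.odd_iff, Int.odd_iff]
      omega
    by_cases h1 : Odd k1
    · rw [if_pos h1, if_neg (hpar.mp h1)]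
      field_simp
      ring
    · rw [if_neg h1, if_pos (by
        rw [Int.odd_iff] at h1 ⊢
        omega)]
      field_simp
      ring

end aux

section aux2
open Real
local notation "⟪" x ", " y "⟫" => inner (𝕜 := ℝ) x y

lemma oneD (M : ℕ) (hM : 0 < M) (x : Fin M → Quaternion ℝ) :
    ∑ u : Fin M, ‖dctAlpha M u •
      ∑ m : Fin M, Real.cos (Real.pi * (2 * (m : ℝ) + 1) * (u : ℝ) / (2 * (M : ℝ))) • x m‖ ^ 2
    = ∑ m : Fin M, ‖x m‖ ^ 2 := by
  have step1 : ∀ u : Fin M,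
      ‖dctAlpha M u •
        ∑ m : Fin M, Real.cos (Real.pi * (2 * (m : ℝ) + 1) * (u : ℝ) / (2 * (M : ℝ))) • x m‖ ^ 2
      = ∑ m : Fin M, ∑ m' : Fin M,
          (dctAlpha M u ^ 2 *
            (Real.cos (Real.pi * (2 * (m : ℝ) + 1) * (u : ℝ) / (2 * (M : ℝ))) *
             Real.cos (Real.pi * (2 * (m' : ℝ) + 1) * (u : ℝ) / (2 * (M : ℝ))))) *
          ⟪x m, x m'⟫ := by
    intro u
    rw [norm_smul, mul_pow, Real.norm_eq_abs, sq_abs, ← real_inner_self_eq_norm_sq]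
    rw [sum_inner]
    rw [Finset.mul_sum]
    refine Finset.sum_congr rfl fun m _ => ?_
    rw [inner_sum, Finset.mul_sum]
    refine Finset.sum_congr rfl fun m' _ => ?_
    rw [real_inner_smul_left, real_inner_smul_right]
    ring
  simp only [step1]
  rw [Finset.sum_comm]
  have step2 : ∀ m : Fin M,
      (∑ u : Fin M, ∑ m' : Fin M,
        (dctAlpha M u ^ 2 *
          (Real.cos (Real.pi * (2 * (m : ℝ) + 1) * (u : ℝ) / (2 * (M : ℝ))) *
           Real.cos (Real.pi * (2 * (m' : ℝ) + 1) * (u : ℝ) / (2 * (M : ℝ))))) *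
        ⟪x m, x m'⟫)
      = ‖x m‖ ^ 2 := by
    intro m
    rw [Finset.sum_comm]
    have : ∀ m' : Fin M,
        (∑ u : Fin M,
          (dctAlpha M u ^ 2 *
            (Real.cos (Real.pi * (2 * (m : ℝ) + 1) * (u : ℝ) / (2 * (M : ℝ))) *
             Real.cos (Real.pi * (2 * (m' : ℝ) + 1) * (u : ℝ) / (2 * (M : ℝ))))) *
          ⟪x m, x m'⟫)
        = (if m = m' then (1:ℝ) else 0) * ⟪x m, x m'⟫ := by
      intro m'
      rw [← Finset.sum_mul, dct_ortho M hM m m']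
    simp only [this]
    simp [Finset.sum_ite_eq, real_inner_self_eq_norm_sq]
  exact Finset.sum_congr rfl fun m _ => step2 m

end aux2

/-- Parseval theorem for the left quaternion discrete cosine transform: the
transform preserves the Frobenius norm. -/
theorem fqdctL_parseval (M N : ℕ) (hM : 1 ≤ M) (hN : 1 ≤ N)
    (q : Quaternion ℝ) (hre : q.re = 0) (hq : q ^ 2 = -1)
    (Q : Matrix (Fin M) (Fin N) (Quaternion ℝ)) :
    frob (FQDCTL M N q Q) = frob Q := by
  have hM0 : 0 < M := hM
  have hN0 : 0 < N := hN
  -- ‖q‖ = 1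
  have hqre : (q ^ 2).re = -1 := by rw [hq]; simp [Quaternion.re_one]
  have hnormSq : Quaternion.normSq q = 1 := by
    rw [pow_two, Quaternion.re_mul] at hqre
    rw [Quaternion.normSq_def']
    nlinarith [hqre, hre]
  have hq1 : ‖q‖ = 1 := by
    have h := Quaternion.normSq_eq_norm_mul_self q
    nlinarith [norm_nonneg q, h, hnormSq]
  unfold frob
  congr 1
  -- nested form of the transform
  set y : Fin M → Fin N → Quaternion ℝ := fun m v =>
    dctAlpha N v • ∑ n : Fin N,
      Real.cos (Real.pi * (2 * (n : ℝ) + 1) * (v : ℝ) / (2 * (N : ℝ))) • (q * Q m n) with hy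
  have key : ∀ (u : Fin M) (v : Fin N),
      FQDCTL M N q Q u v
      = dctAlpha M u • ∑ m : Fin M,
          Real.cos (Real.pi * (2 * (m : ℝ) + 1) * (u : ℝ) / (2 * (M : ℝ))) • y m v := by
    intro u v
    show (dctAlpha M u * dctAlpha N v) •
        ∑ m : Fin M, ∑ n : Fin N, (dctKer M N u v m n) • (q * Q m n) = _
    rw [hy]
    simp only [Finset.smul_sum, smul_smul]
    refine Finset.sum_congr rfl fun m _ => Finset.sum_congr rfl fun n _ => ?_
    congr 1
    unfold dctKer
    ring
  calc ∑ u : Fin M, ∑ v : Fin N, ‖FQDCTL M N q Q u v‖ ^ 2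
      = ∑ v : Fin N, ∑ u : Fin M, ‖dctAlpha M u • ∑ m : Fin M,
          Real.cos (Real.pi * (2 * (m : ℝ) + 1) * (u : ℝ) / (2 * (M : ℝ))) • y m v‖ ^ 2 := by
        simp only [key]
        rw [Finset.sum_comm]
    _ = ∑ v : Fin N, ∑ m : Fin M, ‖y m v‖ ^ 2 := by
        exact Finset.sum_congr rfl fun v _ => oneD M hM0 (fun m => y m v)
    _ = ∑ m : Fin M, ∑ v : Fin N, ‖y m v‖ ^ 2 := Finset.sum_comm
    _ = ∑ m : Fin M, ∑ n : Fin N, ‖q * Q m n‖ ^ 2 := by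
        exact Finset.sum_congr rfl fun m _ => oneD N hN0 (fun n => q * Q m n)
    _ = ∑ m : Fin M, ∑ n : Fin N, ‖Q m n‖ ^ 2 := by
        simp [norm_mul, hq1]
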